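/- Let f : S → S be an orientation-preserving, area-preserving homeomorphism of a compact connected orientable surface S, and let U be an invariant domain with finitely many ideal boundary points. If e is a fixed prime end of U and p is a principal point of e, then f(p) = p. -/
import Mathlib


open Filter Topology MeasureTheory

variable {S : Type*} [TopologicalSpace S]

/-- Frontier of `V` relative to the open set `U` (for `V ⊆ U` open). -/
def frIn (U V : Set S) : Set S := (closure V ∩ U) \ V

/-- A chain in the domain `U`. -/
def IsPEChain (U : Set S) (V : ℕ → Set S) : Prop :=
  (∀ i, IsOpen (V i)) ∧ (∀ i, IsConnected (V i)) ∧ (∀ i, V i ⊆ U) ∧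
  (∀ i, V (i + 1) ⊆ V i) ∧
  (∀ i, (frIn U (V i)).Nonempty ∧ IsPreconnected (frIn U (V i))) ∧
  (∀ i j, i ≠ j → closure (frIn U (V i)) ∩ closure (frIn U (V j)) = ∅)

/-- The chain `W` divides the chain `V`. -/
def ChainDivides (W V : ℕ → Set S) : Prop := ∀ i, ∃ j, W j ⊆ V i

/-- Two chains are equivalent if each divides the other. -/
def ChainEquiv (W V : ℕ → Set S) : Prop := ChainDivides W V ∧ ChainDivides V W

/-- The frontiers of the chain `V` converge to the point `p`. -/
def FrTendsTo (U : Set S) (V : ℕ → Set S) (p : S) : Prop :=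
  ∀ N ∈ 𝓝 p, ∀ᶠ i in atTop, frIn U (V i) ⊆ N

/-- Separation: a preconnected subset of `U` avoiding the relative frontier of an
open set `D` lies inside `D` or away from `closure D`. -/
lemma frIn_separates {U D C : Set S} (hUo : IsOpen U) (hDo : IsOpen D)
    (hC : IsPreconnected C) (hCU : C ⊆ U) (hCF : C ∩ frIn U D = ∅) :
    C ⊆ D ∨ C ⊆ U \ closure D := by
  have hdisj : Disjoint D (U \ closure D) := by
    rw [Set.disjoint_left]
    intro x hxD hx
    exact hx.2 (subset_closure hxD)
  have hsub : C ⊆ D ∪ (U \ closure D) := by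
    intro x hx
    by_cases hxD : x ∈ D
    · exact Or.inl hxD
    by_cases hxc : x ∈ closure D
    · exact absurd (Set.eq_empty_iff_forall_notMem.mp hCF x ⟨hx, ⟨hxc, hCU hx⟩, hxD⟩) not_false
    · exact Or.inr ⟨hCU hx, hxc⟩
  exact hC.subset_or_subset hDo (hUo.sdiff isClosed_closure) hdisj hsub

/-- Trapping-region contradiction: if a measure-preserving homeomorphism `g`
maps the relative closure of `D` into `D`, with image frontier and image of `D`
avoiding the relative frontier of `D`, then Poincaré recurrence is violated. -/
lemma trap_contra [MeasurableSpace S] [BorelSpace S]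
    (μ : Measure S) [IsFiniteMeasure μ]
    (hpos : ∀ O : Set S, IsOpen O → O.Nonempty → 0 < μ O)
    (g : S ≃ₜ S) (hg : MeasurePreserving g μ μ)
    (U D : Set S) (hU : g '' U = U) (hDo : IsOpen D) (hDU : D ⊆ U)
    (hFne : (frIn U D).Nonempty)
    (hgF : (g '' frIn U D) ∩ frIn U D = ∅)
    (hgD : (g '' D) ∩ frIn U D = ∅)
    (htrap : g '' (closure D ∩ U) ⊆ D) : False := by
  set E : Set S := closure D ∩ U with hEdef
  have hDE : D ⊆ E := Set.subset_inter subset_closure hDU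
  have hgE : g '' E = closure (g '' D) ∩ U := by
    rw [hEdef, Set.image_inter g.injective, g.image_closure, hU]
  set O : Set S := D \ closure (g '' D) with hOdef
  have hOo : IsOpen O := hDo.sdiff isClosed_closure
  have hOne : O.Nonempty := by
    rw [Set.nonempty_iff_ne_empty]
    intro h
    have hDsub : D ⊆ closure (g '' D) := by
      intro x hx
      by_contra hx2
      exact (Set.eq_empty_iff_forall_notMem.mp h x) ⟨hx, hx2⟩
    obtain ⟨x, hx⟩ := hFne
    have hx1 : x ∈ closure (g '' D) := by
      have hsub : closure D ⊆ closure (g '' D) := by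
        rw [← closure_closure (s := g '' D)]
        exact closure_mono hDsub
      exact hsub hx.1.1
    have hx2 : x ∉ g '' D := fun hmem =>
      Set.eq_empty_iff_forall_notMem.mp hgD x ⟨hmem, hx⟩
    have hxE : x ∈ g '' E := by rw [hgE]; exact ⟨hx1, hx.1.2⟩
    have hxF : x ∈ g '' frIn U D := by
      have : x ∈ g '' E \ g '' D := ⟨hxE, hx2⟩
      rwa [← Set.image_diff g.injective] at this
    exact Set.eq_empty_iff_forall_notMem.mp hgF x ⟨hxF, hx⟩
  have hμO : μ O ≠ 0 := (hpos O hOo hOne).ne'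
  -- iterates of E stay inside E, hence (for m ≥ 1) inside g '' E ⊆ closure (g '' D)
  have hgEE : g '' E ⊆ E := htrap.trans hDE
  have hiter : ∀ n : ℕ, (⇑g)^[n] '' E ⊆ E := by
    intro n
    induction n with
    | zero => simp
    | succ n ih =>
      rw [Function.iterate_succ, Set.image_comp]
      exact (Set.image_mono hgEE).trans ih
  have hdisj : ∀ m : ℕ, m ≠ 0 → ∀ x ∈ O, (⇑g)^[m] x ∉ O := by
    intro m hm x hxO hmem
    obtain ⟨n, rfl⟩ : ∃ n, m = n + 1 := ⟨m - 1, (Nat.succ_pred_eq_of_ne_zero hm).symm⟩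
    have hxE : x ∈ E := hDE hxO.1
    have h1 : (⇑g)^[n + 1] x ∈ g '' ((⇑g)^[n] '' E) := by
      rw [← Set.image_comp, ← Function.iterate_succ']
      exact Set.mem_image_of_mem _ hxE
    have h2 : (⇑g)^[n + 1] x ∈ g '' E := Set.image_mono (hiter n) h1
    have h3 : (⇑g)^[n + 1] x ∈ closure (g '' D) := by
      rw [hgE] at h2; exact h2.1
    exact hmem.2 h3
  have hc : Conservative (⇑g) μ := hg.conservative
  obtain ⟨x, hxO, m, hm, hmx⟩ := hc.exists_mem_iterate_mem' hOo.measurableSet hμO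
  exact hdisj m hm x hxO hmx

/-- Cartwright–Littlewood: if the prime end represented by the prime chain `V`
in the invariant domain `U` is fixed by the induced map (i.e. `(f(Vᵢ))` is a
chain equivalent to `(Vᵢ)`), then every principal point `p` of this prime end
is a fixed point of `f`. -/
theorem cartwright_littlewood
    [CompactSpace S] [ConnectedSpace S] [T2Space S]
    [MeasurableSpace S] [BorelSpace S]
    (μ : Measure S) [IsFiniteMeasure μ]
    (hpos : ∀ O : Set S, IsOpen O → O.Nonempty → 0 < μ O)
    (f : S ≃ₜ S) (hf : MeasurePreserving f μ μ)
    (U : Set S) (hUo : IsOpen U) (hUc : IsConnected U) (hUinv : f '' U = U)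
    (V : ℕ → Set S) (hV : IsPEChain U V)
    (hVprime : ∀ W : ℕ → Set S, IsPEChain U W → ChainDivides W V → ChainEquiv W V)
    (hfixed : ChainEquiv (fun i => f '' V i) V)
    (p : S) (W : ℕ → Set S) (hW : IsPEChain U W) (hWV : ChainEquiv W V)
    (hp : FrTendsTo U W p) :
    f p = p := by
  by_contra hne
  -- a neighborhood `A` of `p` with `f(A) ∩ A = ∅`
  obtain ⟨uu, vv, huo, hvo, hfpu, hpv, huv⟩ := t2_separation hne
  set A : Set S := vv ∩ f ⁻¹' uu with hAdef
  have hAo : IsOpen A := hvo.inter (huo.preimage f.continuous)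
  have hpA : p ∈ A := ⟨hpv, hfpu⟩
  have hA : ∀ x ∈ A, f x ∉ A := fun x hx hfx =>
    Set.disjoint_left.mp huv hx.2 hfx.1
  have hfA : ∀ {s t : Set S}, s ⊆ A → t ⊆ A → (f '' s) ∩ t = ∅ := by
    intro s t hs ht
    rw [Set.eq_empty_iff_forall_notMem]
    rintro x ⟨⟨y, hy, rfl⟩, hxt⟩
    exact hA y (hs hy) (ht hxt)
  have hsA : ∀ {s t : Set S}, s ⊆ A → t ⊆ A → (f.symm '' s) ∩ t = ∅ := by
    intro s t hs ht
    rw [Set.eq_empty_iff_forall_notMem]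
    rintro x ⟨⟨y, hy, rfl⟩, hxt⟩
    have h' := hA (f.symm y) (ht hxt)
    rw [f.apply_symm_apply] at h'
    exact h' (hs hy)
  -- eventual containment of frontiers in `A`
  obtain ⟨N, hN⟩ := eventually_atTop.mp (hp A (hAo.mem_nhds hpA))
  -- chain structure of `W`
  obtain ⟨hWo, hWc, hWU, hWn, hWf, -⟩ := hW
  have hmono : Antitone W := antitone_nat_of_succ_le hWn
  -- divisibility between `W` and `f ∘ W`
  have dWV : ChainDivides W V := hWV.1
  have dVW : ChainDivides V W := hWV.2
  have dfWW : ChainDivides (fun i => f '' W i) W := by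
    intro i
    obtain ⟨j, hj⟩ := dVW i
    obtain ⟨j2, hj2⟩ := hfixed.1 j
    obtain ⟨j3, hj3⟩ := dWV j2
    exact ⟨j3, (Set.image_mono hj3).trans ((hj2.trans (hj : V j ⊆ W i)) : f '' V j2 ⊆ W i)⟩
  have dWfW : ChainDivides W (fun i => f '' W i) := by
    intro i
    obtain ⟨k, hk⟩ := dVW i
    obtain ⟨m, hm⟩ := hfixed.2 k
    obtain ⟨n, hn⟩ := dWV m
    exact ⟨n, (hn.trans hm).trans (Set.image_mono hk)⟩
  -- choose the working chain element `D`
  obtain ⟨j1, hj1⟩ := dfWW N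
  set a : ℕ := max j1 N with hadef
  have haN : N ≤ a := le_max_right _ _
  have hfa : f '' W a ⊆ W N := (Set.image_mono (hmono (le_max_left _ _))).trans hj1
  set D : Set S := W a with hDdef
  set F : Set S := frIn U D with hFdef
  set E : Set S := closure D ∩ U with hEdef
  have hFA : F ⊆ A := hN a haN
  have hDo : IsOpen D := hWo a
  have hDU : D ⊆ U := hWU a
  have hFne : F.Nonempty := (hWf a).1
  have hFpre : IsPreconnected F := (hWf a).2
  have hDE : D ⊆ E := Set.subset_inter subset_closure hDU
  have hEU : E ⊆ U := Set.inter_subset_right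
  have hFU : F ⊆ U := fun x hx => hx.1.2
  have hEF : E = D ∪ F := by
    rw [hFdef]
    exact (Set.union_diff_cancel hDE).symm
  have hEpre : IsPreconnected E :=
    (hWc a).isPreconnected.subset_closure hDE Set.inter_subset_left
  -- `f '' D` meets `D`
  obtain ⟨k, hk⟩ := dWfW a
  have hmeet : (f '' D ∩ D).Nonempty := by
    obtain ⟨x, hx⟩ := (hWc (max k a)).nonempty
    exact ⟨x, hk (hmono (le_max_left _ _) hx), hmono (le_max_right _ _) hx⟩
  -- invariance of U under f.symm
  have hUinv' : f.symm '' U = U := by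
    conv_lhs => rw [← hUinv]
    ext x
    simp
  -- relative closures transform well
  have hfE : f '' E = closure (f '' D) ∩ U := by
    rw [hEdef, Set.image_inter f.injective, f.image_closure, hUinv]
  have hsE : f.symm '' E = closure (f.symm '' D) ∩ U := by
    rw [hEdef, Set.image_inter f.symm.injective, f.symm.image_closure, hUinv']
  have himgE : f '' E = f '' D ∪ f '' F := by rw [hEF, Set.image_union]
  have hsimgE : f.symm '' E = f.symm '' D ∪ f.symm '' F := by rw [hEF, Set.image_union]
  -- dichotomy for images of F
  have hfF : f '' F ∩ F = ∅ := hfA hFA hFA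
  have hsF : f.symm '' F ∩ F = ∅ := hsA hFA hFA
  have hfFU : f '' F ⊆ U := by rw [← hUinv]; exact Set.image_mono hFU
  have hsFU : f.symm '' F ⊆ U := by rw [← hUinv']; exact Set.image_mono hFU
  have hfFpre : IsPreconnected (f '' F) := hFpre.image _ f.continuous.continuousOn
  have hsFpre : IsPreconnected (f.symm '' F) := hFpre.image _ f.symm.continuous.continuousOn
  have P1 := frIn_separates hUo hDo hfFpre hfFU hfF
  have P2 := frIn_separates hUo hDo hsFpre hsFU hsF
  -- helper: trapping conclusion for f, given the two disjointness facts
  have htrapf : f '' D ∩ F = ∅ → f '' E ⊆ D := by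
    intro hfDF
    have hpre : IsPreconnected (f '' E) := hEpre.image _ f.continuous.continuousOn
    have hEsU : f '' E ⊆ U := by rw [← hUinv]; exact Set.image_mono hEU
    have hdisjF : f '' E ∩ F = ∅ := by
      rw [himgE, Set.union_inter_distrib_right, hfDF, hfF, Set.union_empty]
    rcases frIn_separates hUo hDo hpre hEsU hdisjF with h | h
    · exact h
    · exfalso
      obtain ⟨x, hx1, hx2⟩ := hmeet
      exact (h (Set.image_mono hDE hx1)).2 (subset_closure hx2)
  rcases P1 with h1 | h1 <;> rcases P2 with h2 | h2
  · -- both images of F inside D: D ∪ f '' D is clopen in U, so U = W N, contradiction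
    have hFfD : F ⊆ f '' D := by
      intro x hx
      have : f.symm x ∈ D := h2 (Set.mem_image_of_mem _ hx)
      exact ⟨f.symm x, this, f.apply_symm_apply x⟩
    set H : Set S := D ∪ f '' D with hHdef
    have hHo : IsOpen H := hDo.union (f.isOpenMap D hDo)
    have hHU : H ⊆ U := Set.union_subset hDU (by rw [← hUinv]; exact Set.image_mono hDU)
    have hclH : closure H ∩ U ⊆ H := by
      rw [hHdef, closure_union]
      rintro x ⟨hx1 | hx1, hxU⟩
      · have hxE : x ∈ E := ⟨hx1, hxU⟩
        rw [hEF] at hxE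
        rcases hxE with h | h
        · exact Or.inl h
        · exact Or.inr (hFfD h)
      · have hxE : x ∈ f '' E := by rw [hfE]; exact ⟨hx1, hxU⟩
        rw [himgE] at hxE
        rcases hxE with h | h
        · exact Or.inr h
        · exact Or.inl (h1 h)
    have hdisjH : Disjoint H (U \ closure H) := by
      rw [Set.disjoint_left]
      intro x hxH hx
      exact hx.2 (subset_closure hxH)
    have hsubU : U ⊆ H ∪ (U \ closure H) := by
      intro x hxU
      by_cases hx : x ∈ closure H
      · exact Or.inl (hclH ⟨hx, hxU⟩)
      · exact Or.inr ⟨hxU, hx⟩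
    rcases hUc.isPreconnected.subset_or_subset hHo (hUo.sdiff isClosed_closure)
        hdisjH hsubU with hUH | hUH
    · -- U ⊆ H ⊆ W N, so frIn U (W N) = ∅, contradicting nonemptiness
      have hHWN : H ⊆ W N := Set.union_subset (hmono haN) hfa
      obtain ⟨x, hx⟩ := (hWf N).1
      exact hx.2 (hHWN (hUH hx.1.2))
    · obtain ⟨x, hx⟩ := (hWc a).nonempty
      have hxH : x ∈ H := Or.inl hx
      exact (hUH (hHU hxH)).2 (subset_closure hxH)
  · -- f '' F ⊆ D, f.symm '' F outside: trap for f
    have hfDF : f '' D ∩ F = ∅ := by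
      rw [Set.eq_empty_iff_forall_notMem]
      rintro x ⟨⟨y, hy, rfl⟩, hxF⟩
      have : f.symm (f y) ∈ f.symm '' F := Set.mem_image_of_mem _ hxF
      rw [f.symm_apply_apply] at this
      exact (h2 this).2 (subset_closure hy)
    exact absurd (htrapf hfDF) (fun ht =>
      trap_contra μ hpos f hf U D hUinv hDo hDU hFne hfF hfDF ht)
  · -- f.symm '' F ⊆ D, f '' F outside: trap for f.symm
    have hfs : MeasurePreserving (⇑f.symm) μ μ := by
      have h0 : MeasurePreserving (⇑f.toMeasurableEquiv) μ μ := by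
        rwa [Homeomorph.toMeasurableEquiv_coe]
      have := h0.symm f.toMeasurableEquiv
      rwa [Homeomorph.toMeasurableEquiv_symm_coe] at this
    have hsDF : f.symm '' D ∩ F = ∅ := by
      rw [Set.eq_empty_iff_forall_notMem]
      rintro x ⟨⟨y, hy, rfl⟩, hxF⟩
      have : f (f.symm y) ∈ f '' F := Set.mem_image_of_mem _ hxF
      rw [f.apply_symm_apply] at this
      exact (h1 this).2 (subset_closure hy)
    have htrap : f.symm '' E ⊆ D := by
      have hpre : IsPreconnected (f.symm '' E) := hEpre.image _ f.symm.continuous.continuousOn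
      have hEsU : f.symm '' E ⊆ U := by rw [← hUinv']; exact Set.image_mono hEU
      have hdisjF : f.symm '' E ∩ F = ∅ := by
        rw [hsimgE, Set.union_inter_distrib_right, hsDF, hsF, Set.union_empty]
      rcases frIn_separates hUo hDo hpre hEsU hdisjF with h | h
      · exact h
      · exfalso
        obtain ⟨x, hx⟩ := hFne.image (⇑f.symm)
        have hxE : x ∈ f.symm '' E := Set.image_mono (hEF ▸ Set.subset_union_right) hx
        exact (h hxE).2 (subset_closure (h2 hx))
    exact trap_contra μ hpos f.symm hfs U D hUinv' hDo hDU hFne hsF hsDF htrap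
  · -- both outside: impossible since f '' E would be trapped in D yet f '' F outside
    have hfDF : f '' D ∩ F = ∅ := by
      rw [Set.eq_empty_iff_forall_notMem]
      rintro x ⟨⟨y, hy, rfl⟩, hxF⟩
      have : f.symm (f y) ∈ f.symm '' F := Set.mem_image_of_mem _ hxF
      rw [f.symm_apply_apply] at this
      exact (h2 this).2 (subset_closure hy)
    have ht := htrapf hfDF
    obtain ⟨x, hx⟩ := hFne.image (⇑f)
    have hxD : x ∈ D := ht (Set.image_mono (hEF ▸ Set.subset_union_right) hx)
    exact (h1 hx).2 (subset_closure hxD)
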